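/- Let α be a measurable space, κ a Markov kernel from α to α, γ ∈ (0,1), and s ↦ ρ_s a measurable assignment of probability measures on ℝ, each supported in a fixed bounded interval [−R, R]. Let M ≥ 0 and let F : α × ℝ → ℝ be jointly measurable such that for every s ∈ α, F(s,·) is the CDF of a probability measure with ‖F(s,·) − F_{δ₀}‖_{L²(ℝ)} ≤ M. Then for every s ∈ α, the Bellman update (T F)(s)(x) = ∫_α ∫_ℝ F(s', (x − r)/γ) dρ_s(r) dκ(s)(s') satisfies (T F)(s,·) − F_{δ₀} ∈ L²(ℝ); i.e. the admissible CDF class Γ_F is invariant under the CDF Bellman operator with bounded rewards. -/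

import Mathlib

open MeasureTheory ProbabilityTheory Filter ENNReal NNReal

/-- The CDF of the Dirac measure at `0`: the indicator of `[0, ∞)`. -/
noncomputable def diracCdf (x : ℝ) : ℝ := if 0 ≤ x then 1 else 0

/-- The CDF Bellman operator: `(T F)(s)(x) = ∫ ∫ F(s', (x - r)/γ) dρ_s(r) dκ(s)(s')`. -/
noncomputable def bellmanCdf {α : Type*} [MeasurableSpace α]
    (κ : Kernel α α) (ρ : Kernel α ℝ) (γ : ℝ)
    (F : α → ℝ → ℝ) (s : α) (x : ℝ) : ℝ :=
  ∫ s', ∫ r, F s' ((x - r) / γ) ∂(ρ s) ∂(κ s)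

private lemma diracCdf_measurable : Measurable diracCdf := by
  unfold diracCdf
  exact Measurable.ite measurableSet_Ici measurable_const measurable_const

/-- Cauchy–Schwarz for a probability measure: `(∫⁻ f)² ≤ ∫⁻ f²`. -/
private lemma sq_lintegral_le {β : Type*} [MeasurableSpace β] (μ : Measure β)
    [IsProbabilityMeasure μ] {f : β → ℝ≥0∞} (hf : AEMeasurable f μ) :
    (∫⁻ x, f x ∂μ) ^ 2 ≤ ∫⁻ x, f x ^ 2 ∂μ := by
  have hconj : Real.HolderConjugate 2 2 := Real.HolderConjugate.two_two
  have h := ENNReal.lintegral_mul_le_Lp_mul_Lq μ hconj hf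
    (aemeasurable_const (b := (1 : ℝ≥0∞)))
  simp only [Pi.mul_apply, mul_one, ENNReal.one_rpow, lintegral_one, measure_univ,
    ENNReal.one_rpow, mul_one] at h
  have h2 : ((∫⁻ x, f x ^ (2 : ℝ) ∂μ) ^ (1 / (2 : ℝ))) ^ (2 : ℕ)
      = ∫⁻ x, f x ^ (2 : ℝ) ∂μ := by
    rw [← ENNReal.rpow_natCast _ 2, ← ENNReal.rpow_mul]
    norm_num
  have h3 : (∫⁻ x, f x ∂μ) ^ (2 : ℕ)
      ≤ ((∫⁻ x, f x ^ (2 : ℝ) ∂μ) ^ (1 / (2 : ℝ))) ^ (2 : ℕ) := by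
    rw [pow_two, pow_two]; exact mul_le_mul' h h
  rw [h2] at h3
  have h4 : ∀ x, f x ^ (2 : ℝ) = f x ^ (2 : ℕ) := by
    intro x; rw [← ENNReal.rpow_natCast]; norm_num
  simp_rw [h4] at h3
  exact h3

/-- Change of variables for the affine map `x ↦ (x - d)/c`, `c > 0`. -/
private lemma lintegral_comp_affine {g : ℝ → ℝ≥0∞} (hg : Measurable g) {c : ℝ} (hc : 0 < c)
    (d : ℝ) : ∫⁻ x, g ((x - d) / c) = ENNReal.ofReal c * ∫⁻ y, g y := by
  have hc' : c⁻¹ ≠ 0 := inv_ne_zero hc.ne'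
  have hgd : Measurable fun y : ℝ => g (y - d / c) :=
    hg.comp (measurable_id.sub measurable_const)
  have key : ∀ x : ℝ, (x - d) / c = c⁻¹ * x - d / c := by
    intro x; field_simp
  simp_rw [key]
  have h1 : ∫⁻ x, g (c⁻¹ * x - d / c) ∂volume
      = ∫⁻ y, g (y - d / c) ∂(Measure.map (c⁻¹ * ·) volume) := by
    rw [lintegral_map hgd (measurable_const_mul _)]
  rw [h1, Real.map_volume_mul_left hc', lintegral_smul_measure, inv_inv,
    abs_of_pos hc]
  congr 1
  exact (measurePreserving_sub_right volume (d / c)).lintegral_comp hg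

/-- From an `eLpNorm` bound to a bound on the lintegral of the square. -/
private lemma lintegral_sq_le_of_eLpNorm {f : ℝ → ℝ} {M : ℝ}
    (h : eLpNorm f 2 volume ≤ ENNReal.ofReal M) :
    ∫⁻ y, (‖f y‖₊ : ℝ≥0∞) ^ 2 ∂volume ≤ ENNReal.ofReal M ^ 2 := by
  rw [eLpNorm_eq_lintegral_rpow_enorm_toReal (by norm_num) (by norm_num)] at h
  simp only [enorm_eq_nnnorm] at h
  have h2 := mul_le_mul' h h
  rw [← pow_two, ← pow_two] at h2
  have htoReal : (2 : ℝ≥0∞).toReal = 2 := by norm_num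
  rw [htoReal] at h2
  have h3 : ((∫⁻ y, (‖f y‖₊ : ℝ≥0∞) ^ (2 : ℝ) ∂volume) ^ (1 / (2 : ℝ))) ^ (2 : ℕ)
      = ∫⁻ y, (‖f y‖₊ : ℝ≥0∞) ^ (2 : ℝ) ∂volume := by
    rw [← ENNReal.rpow_natCast _ 2, ← ENNReal.rpow_mul]
    norm_num
  rw [h3] at h2
  have h4 : ∀ y, (‖f y‖₊ : ℝ≥0∞) ^ (2 : ℝ) = (‖f y‖₊ : ℝ≥0∞) ^ (2 : ℕ) := by
    intro y; rw [← ENNReal.rpow_natCast]; norm_num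
  simp_rw [h4] at h2
  exact h2

/-- **Invariance of the admissible CDF class `Γ_F` under the CDF Bellman operator with
bounded rewards.**  If each `F(s,·)` is a CDF with `‖F(s,·) - F_{δ₀}‖_{L²} ≤ M` and each
reward measure `ρ_s` is supported in `[-R, R]`, then for every state `s` the Bellman update
satisfies `(T F)(s,·) - F_{δ₀} ∈ L²(ℝ)`. -/
theorem bellmanCdf_preserves_gammaF
    {α : Type*} [MeasurableSpace α]
    (κ : Kernel α α) [IsMarkovKernel κ]
    (ρ : Kernel α ℝ) [IsMarkovKernel ρ]
    (γ R : ℝ) (hγ : γ ∈ Set.Ioo (0 : ℝ) 1)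
    (hρ : ∀ s, (ρ s) (Set.Icc (-R) R)ᶜ = 0)
    (M : ℝ) (hM : 0 ≤ M)
    (F : α → ℝ → ℝ) (hmeas : Measurable (Function.uncurry F))
    (hcdf : ∀ s, ∃ P : Measure ℝ, IsProbabilityMeasure P ∧
      ∀ x, F s x = (P (Set.Iic x)).toReal)
    (hbound : ∀ s, eLpNorm (fun x => F s x - diracCdf x) 2 volume ≤ ENNReal.ofReal M) :
    ∀ s, MemLp (fun x => bellmanCdf κ ρ γ F s x - diracCdf x) 2 (volume : Measure ℝ) := by
  obtain ⟨hγ0, hγ1⟩ := hγ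
  -- basic properties of the CDFs `F s`
  have hF0 : ∀ s y, 0 ≤ F s y := by
    intro s y; obtain ⟨P, hP, hFP⟩ := hcdf s
    rw [hFP]; exact ENNReal.toReal_nonneg
  have hF1 : ∀ s y, F s y ≤ 1 := by
    intro s y; obtain ⟨P, hP, hFP⟩ := hcdf s
    rw [hFP]
    have h1 : P (Set.Iic y) ≤ 1 := prob_le_one
    calc (P (Set.Iic y)).toReal ≤ (1 : ℝ≥0∞).toReal :=
          ENNReal.toReal_mono ENNReal.one_ne_top h1
      _ = 1 := by simp
  have hFmono : ∀ s, Monotone (F s) := by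
    intro s; obtain ⟨P, hP, hFP⟩ := hcdf s
    intro a b hab
    rw [hFP, hFP]
    exact ENNReal.toReal_mono (measure_ne_top P _)
      (measure_mono (Set.Iic_subset_Iic.2 hab))
  intro s
  -- `R` is nonnegative
  have hR : 0 ≤ R := by
    by_contra h
    push_neg at h
    have hempty : Set.Icc (-R) R = ∅ := Set.Icc_eq_empty (by linarith)
    have h2 := hρ s
    rw [hempty, Set.compl_empty] at h2
    simp [measure_univ] at h2
  set ω : Measure (α × ℝ) := (κ s).prod (ρ s) with hω
  haveI : IsProbabilityMeasure ω := by rw [hω]; infer_instance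
  -- `G` is the deviation of `F` from the Dirac CDF
  set G : α → ℝ → ℝ := fun s' y => F s' y - diracCdf y with hGdef
  have hGmeas : Measurable (Function.uncurry G) :=
    hmeas.sub (diracCdf_measurable.comp measurable_snd)
  have hGabs1 : ∀ s' y, 0 ≤ y → (‖G s' y‖₊ : ℝ≥0∞) = ENNReal.ofReal (1 - F s' y) := by
    intro s' y hy
    rw [← enorm_eq_nnnorm, Real.enorm_eq_ofReal_abs]
    congr 1
    have : diracCdf y = 1 := if_pos hy
    rw [hGdef]; simp only [this]
    rw [abs_of_nonpos (by linarith [hF1 s' y])]; ring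
  have hGabs0 : ∀ s' y, y < 0 → (‖G s' y‖₊ : ℝ≥0∞) = ENNReal.ofReal (F s' y) := by
    intro s' y hy
    rw [← enorm_eq_nnnorm, Real.enorm_eq_ofReal_abs]
    congr 1
    have : diracCdf y = 0 := if_neg (not_le.2 hy)
    rw [hGdef]; simp only [this]
    rw [sub_zero, abs_of_nonneg (hF0 s' y)]
  -- the integrand of the Bellman operator, seen on the product space
  have hmeasf : ∀ x : ℝ, Measurable fun p : α × ℝ => F p.1 ((x - p.2) / γ) := by
    intro x
    exact hmeas.comp (measurable_fst.prodMk
      ((measurable_const.sub measurable_snd).div_const γ))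
  have hint : ∀ x, Integrable (fun p : α × ℝ => F p.1 ((x - p.2) / γ)) ω := by
    intro x
    refine (integrable_const (1 : ℝ)).mono' (hmeasf x).aestronglyMeasurable ?_
    filter_upwards with p
    rw [Real.norm_eq_abs, abs_le]
    exact ⟨by linarith [hF0 p.1 ((x - p.2) / γ)], hF1 p.1 ((x - p.2) / γ)⟩
  have hTeq : ∀ x, bellmanCdf κ ρ γ F s x = ∫ p, F p.1 ((x - p.2) / γ) ∂ω := by
    intro x
    rw [bellmanCdf, hω, integral_prod _ (hint x)]
  have hT0 : ∀ x, 0 ≤ bellmanCdf κ ρ γ F s x := by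
    intro x; rw [hTeq x]
    exact integral_nonneg fun p => hF0 _ _
  have hT1 : ∀ x, bellmanCdf κ ρ γ F s x ≤ 1 := by
    intro x; rw [hTeq x]
    calc ∫ p, F p.1 ((x - p.2) / γ) ∂ω ≤ ∫ _p, (1 : ℝ) ∂ω :=
          integral_mono (hint x) (integrable_const 1) fun p => hF1 _ _
      _ = 1 := by simp
  -- almost every reward lies in `[-R, R]`
  have hsupp : ∀ᵐ p ∂ω, p.2 ∈ Set.Icc (-R) R := by
    have hset : {p : α × ℝ | ¬ p.2 ∈ Set.Icc (-R) R}
        = Set.univ ×ˢ (Set.Icc (-R) R)ᶜ := by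
      ext p; simp
    have : ω {p : α × ℝ | ¬ p.2 ∈ Set.Icc (-R) R} = 0 := by
      rw [hω, hset, Measure.prod_prod, hρ s, mul_zero]
    exact ae_iff.2 this
  -- the dominating functions
  set A : ℝ → ℝ≥0∞ := fun x => ∫⁻ p, (‖G p.1 ((x - R) / γ)‖₊ : ℝ≥0∞) ∂ω with hAdef
  set B : ℝ → ℝ≥0∞ := fun x => ∫⁻ p, (‖G p.1 ((x + R) / γ)‖₊ : ℝ≥0∞) ∂ω with hBdef
  -- measurability of the integrands over the product space
  have hGA : Measurable fun q : ℝ × (α × ℝ) => (‖G q.2.1 ((q.1 - R) / γ)‖₊ : ℝ≥0∞) := by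
    exact (hGmeas.comp ((measurable_snd.fst).prodMk
      ((measurable_fst.sub measurable_const).div_const γ))).enorm
  have hGB : Measurable fun q : ℝ × (α × ℝ) => (‖G q.2.1 ((q.1 + R) / γ)‖₊ : ℝ≥0∞) := by
    exact (hGmeas.comp ((measurable_snd.fst).prodMk
      ((measurable_fst.add measurable_const).div_const γ))).enorm
  -- the pointwise bound
  have hpt : ∀ x, (‖bellmanCdf κ ρ γ F s x - diracCdf x‖₊ : ℝ≥0∞) ^ 2
      ≤ A x ^ 2 + B x ^ 2 + (Set.Ico (-R) R).indicator (fun _ => (1 : ℝ≥0∞)) x := by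
    intro x
    rcases le_or_gt R x with hx | hx
    · -- `x ≥ R` : compare with `A`
      have hdx : diracCdf x = 1 := if_pos (le_trans hR hx)
      have hkey : (‖bellmanCdf κ ρ γ F s x - diracCdf x‖₊ : ℝ≥0∞) ≤ A x := by
        rw [hdx, ← enorm_eq_nnnorm, Real.enorm_eq_ofReal_abs,
          abs_of_nonpos (by linarith [hT1 x])]
        have heq1 : -(bellmanCdf κ ρ γ F s x - 1)
            = ∫ p, (1 - F p.1 ((x - p.2) / γ)) ∂ω := by
          rw [hTeq x, integral_sub (integrable_const 1) (hint x), integral_const]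
          simp [measure_univ]
        have hi : Integrable (fun p : α × ℝ => 1 - F p.1 ((x - p.2) / γ)) ω :=
          (integrable_const 1).sub (hint x)
        rw [heq1, ofReal_integral_eq_lintegral_ofReal hi
          (by filter_upwards with p; simp [hF1 p.1 ((x - p.2) / γ)])]
        refine lintegral_mono_ae ?_
        filter_upwards [hsupp] with p hp
        have h1 : (x - R) / γ ≤ (x - p.2) / γ := by gcongr; exact hp.2
        have h2 : F p.1 ((x - R) / γ) ≤ F p.1 ((x - p.2) / γ) := hFmono _ h1
        rw [hGabs1 p.1 _ (div_nonneg (by linarith) hγ0.le)]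
        exact ENNReal.ofReal_le_ofReal (by linarith)
      calc (‖bellmanCdf κ ρ γ F s x - diracCdf x‖₊ : ℝ≥0∞) ^ 2 ≤ A x ^ 2 := by
            rw [pow_two, pow_two]; exact mul_le_mul' hkey hkey
        _ ≤ A x ^ 2 + B x ^ 2 + _ := le_add_right (le_add_right le_rfl)
    · rcases lt_or_ge x (-R) with hx2 | hx2
      · -- `x < -R` : compare with `B`
        have hdx : diracCdf x = 0 := if_neg (not_le.2 (by linarith))
        have hkey : (‖bellmanCdf κ ρ γ F s x - diracCdf x‖₊ : ℝ≥0∞) ≤ B x := by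
          rw [hdx, sub_zero, ← enorm_eq_nnnorm, Real.enorm_eq_ofReal_abs, abs_of_nonneg (hT0 x), hTeq x,
            ofReal_integral_eq_lintegral_ofReal (hint x)
              (by filter_upwards with p; exact hF0 p.1 ((x - p.2) / γ))]
          refine lintegral_mono_ae ?_
          filter_upwards [hsupp] with p hp
          have h1 : (x - p.2) / γ ≤ (x + R) / γ := by
            gcongr
            linarith [hp.1]
          have h2 : F p.1 ((x - p.2) / γ) ≤ F p.1 ((x + R) / γ) := hFmono _ h1
          rw [hGabs0 p.1 _ (div_neg_of_neg_of_pos (by linarith) hγ0)]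
          exact ENNReal.ofReal_le_ofReal h2
        calc (‖bellmanCdf κ ρ γ F s x - diracCdf x‖₊ : ℝ≥0∞) ^ 2 ≤ B x ^ 2 := by
              rw [pow_two, pow_two]; exact mul_le_mul' hkey hkey
          _ ≤ A x ^ 2 + B x ^ 2 + _ := le_add_right (le_add_left le_rfl)
      · -- `-R ≤ x < R` : compare with the indicator
        have hind : (Set.Ico (-R) R).indicator (fun _ => (1 : ℝ≥0∞)) x = 1 :=
          Set.indicator_of_mem (Set.mem_Ico.2 ⟨hx2, hx⟩) _
        have hkey : (‖bellmanCdf κ ρ γ F s x - diracCdf x‖₊ : ℝ≥0∞) ≤ 1 := by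
          rw [← enorm_eq_nnnorm, Real.enorm_eq_ofReal_abs]
          refine ENNReal.ofReal_le_one.2 ?_
          rw [abs_le]
          unfold diracCdf
          split
          · exact ⟨by linarith [hT0 x, hT1 x], by linarith [hT0 x, hT1 x]⟩
          · exact ⟨by linarith [hT0 x, hT1 x], by linarith [hT0 x, hT1 x]⟩
        calc (‖bellmanCdf κ ρ γ F s x - diracCdf x‖₊ : ℝ≥0∞) ^ 2 ≤ 1 := by
              calc _ ≤ (1 : ℝ≥0∞) ^ 2 := by rw [pow_two, pow_two]; exact mul_le_mul' hkey hkey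
                _ = 1 := one_pow 2
          _ = (Set.Ico (-R) R).indicator (fun _ => (1 : ℝ≥0∞)) x := hind.symm
          _ ≤ A x ^ 2 + B x ^ 2 + _ := le_add_self
  -- the lintegrals of the dominating functions are finite
  have hGsq : ∀ s', ∫⁻ y, (‖G s' y‖₊ : ℝ≥0∞) ^ 2 ∂volume ≤ ENNReal.ofReal M ^ 2 := by
    intro s'
    exact lintegral_sq_le_of_eLpNorm (hbound s')
  have hGsmeas : ∀ s', Measurable fun y => (‖G s' y‖₊ : ℝ≥0∞) := by
    intro s'
    exact (hGmeas.comp (measurable_const.prodMk measurable_id)).enorm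
  have hAsq : ∫⁻ x, A x ^ 2 ∂volume ≤ ENNReal.ofReal γ * ENNReal.ofReal M ^ 2 := by
    have step1 : ∀ x, A x ^ 2 ≤ ∫⁻ p, (‖G p.1 ((x - R) / γ)‖₊ : ℝ≥0∞) ^ 2 ∂ω := by
      intro x
      exact sq_lintegral_le ω ((hGA.comp (measurable_prodMk_left)).aemeasurable)
    calc ∫⁻ x, A x ^ 2 ∂volume
        ≤ ∫⁻ x, ∫⁻ p, (‖G p.1 ((x - R) / γ)‖₊ : ℝ≥0∞) ^ 2 ∂ω ∂volume :=
          lintegral_mono step1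
      _ = ∫⁻ p, ∫⁻ x, (‖G p.1 ((x - R) / γ)‖₊ : ℝ≥0∞) ^ 2 ∂volume ∂ω :=
          lintegral_lintegral_swap ((hGA.pow_const 2).aemeasurable)
      _ ≤ ∫⁻ _p, ENNReal.ofReal γ * ENNReal.ofReal M ^ 2 ∂ω := by
          refine lintegral_mono fun p => ?_
          rw [lintegral_comp_affine ((hGsmeas p.1).pow_const 2) hγ0 R]
          exact mul_le_mul' le_rfl (hGsq p.1)
      _ = ENNReal.ofReal γ * ENNReal.ofReal M ^ 2 := by
          rw [lintegral_const, measure_univ, mul_one]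
  have hBsq : ∫⁻ x, B x ^ 2 ∂volume ≤ ENNReal.ofReal γ * ENNReal.ofReal M ^ 2 := by
    have step1 : ∀ x, B x ^ 2 ≤ ∫⁻ p, (‖G p.1 ((x + R) / γ)‖₊ : ℝ≥0∞) ^ 2 ∂ω := by
      intro x
      exact sq_lintegral_le ω ((hGB.comp (measurable_prodMk_left)).aemeasurable)
    calc ∫⁻ x, B x ^ 2 ∂volume
        ≤ ∫⁻ x, ∫⁻ p, (‖G p.1 ((x + R) / γ)‖₊ : ℝ≥0∞) ^ 2 ∂ω ∂volume :=
          lintegral_mono step1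
      _ = ∫⁻ p, ∫⁻ x, (‖G p.1 ((x + R) / γ)‖₊ : ℝ≥0∞) ^ 2 ∂volume ∂ω :=
          lintegral_lintegral_swap ((hGB.pow_const 2).aemeasurable)
      _ ≤ ∫⁻ _p, ENNReal.ofReal γ * ENNReal.ofReal M ^ 2 ∂ω := by
          refine lintegral_mono fun p => ?_
          have : ∀ x : ℝ, (x + R) / γ = (x - (-R)) / γ := by intro x; ring_nf
          simp_rw [this]
          rw [lintegral_comp_affine ((hGsmeas p.1).pow_const 2) hγ0 (-R)]
          exact mul_le_mul' le_rfl (hGsq p.1)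
      _ = ENNReal.ofReal γ * ENNReal.ofReal M ^ 2 := by
          rw [lintegral_const, measure_univ, mul_one]
  -- measurability of `A`, `B`
  have hAmeas : Measurable A := Measurable.lintegral_prod_right' (f := fun q : ℝ × (α × ℝ) =>
    (‖G q.2.1 ((q.1 - R) / γ)‖₊ : ℝ≥0∞)) hGA
  have hBmeas : Measurable B := Measurable.lintegral_prod_right' (f := fun q : ℝ × (α × ℝ) =>
    (‖G q.2.1 ((q.1 + R) / γ)‖₊ : ℝ≥0∞)) hGB
  -- measurability of the Bellman update
  have hTmeas : Measurable fun x => bellmanCdf κ ρ γ F s x := by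
    have hum : StronglyMeasurable
        (Function.uncurry fun (x : ℝ) (p : α × ℝ) => F p.1 ((x - p.2) / γ)) := by
      refine Measurable.stronglyMeasurable ?_
      exact hmeas.comp ((measurable_snd.fst).prodMk
        ((measurable_fst.sub measurable_snd.snd).div_const γ))
    have := hum.integral_prod_right (ν := ω)
    have heq : (fun x => bellmanCdf κ ρ γ F s x)
        = fun x => ∫ p, F p.1 ((x - p.2) / γ) ∂ω := by
      funext x; exact hTeq x
    rw [heq]
    exact this.measurable
  -- conclusion
  constructor
  · exact (hTmeas.sub diracCdf_measurable).aestronglyMeasurable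
  · rw [eLpNorm_eq_lintegral_rpow_enorm_toReal (by norm_num) (by norm_num)]
    simp only [enorm_eq_nnnorm]
    have htoReal : (2 : ℝ≥0∞).toReal = 2 := by norm_num
    rw [htoReal]
    refine ENNReal.rpow_lt_top_of_nonneg (by norm_num) ?_
    have hrpow : ∀ x : ℝ,
        (‖bellmanCdf κ ρ γ F s x - diracCdf x‖₊ : ℝ≥0∞) ^ (2 : ℝ)
        = (‖bellmanCdf κ ρ γ F s x - diracCdf x‖₊ : ℝ≥0∞) ^ (2 : ℕ) := by
      intro x; rw [← ENNReal.rpow_natCast]; norm_num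
    simp_rw [hrpow]
    have hbnd : ∫⁻ x, (‖bellmanCdf κ ρ γ F s x - diracCdf x‖₊ : ℝ≥0∞) ^ (2 : ℕ) ∂volume
        ≤ ∫⁻ x, (A x ^ 2 + B x ^ 2
            + (Set.Ico (-R) R).indicator (fun _ => (1 : ℝ≥0∞)) x) ∂volume :=
      lintegral_mono hpt
    have hsplit : ∫⁻ x, (A x ^ 2 + B x ^ 2
          + (Set.Ico (-R) R).indicator (fun _ => (1 : ℝ≥0∞)) x) ∂volume
        = (∫⁻ x, A x ^ 2 ∂volume) + (∫⁻ x, B x ^ 2 ∂volume)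
          + ∫⁻ x, (Set.Ico (-R) R).indicator (fun _ => (1 : ℝ≥0∞)) x ∂volume := by
      rw [lintegral_add_left (f := fun x => A x ^ 2 + B x ^ 2) ((hAmeas.pow_const 2).add (hBmeas.pow_const 2)),
        lintegral_add_left (hAmeas.pow_const 2)]
    have hindlt : ∫⁻ x, (Set.Ico (-R) R).indicator (fun _ => (1 : ℝ≥0∞)) x ∂volume < ⊤ := by
      rw [lintegral_indicator measurableSet_Ico, setLIntegral_const]
      simp only [one_mul]
      exact lt_of_le_of_lt (le_refl _) (by
        rw [Real.volume_Ico]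
        exact ENNReal.ofReal_lt_top)
    refine ne_of_lt (lt_of_le_of_lt (hbnd.trans hsplit.le) ?_)
    have h1 : (∫⁻ x, A x ^ 2 ∂volume) < ⊤ :=
      lt_of_le_of_lt hAsq (by
        exact ENNReal.mul_lt_top ENNReal.ofReal_lt_top
          (ENNReal.pow_lt_top ENNReal.ofReal_lt_top))
    have h2 : (∫⁻ x, B x ^ 2 ∂volume) < ⊤ :=
      lt_of_le_of_lt hBsq (by
        exact ENNReal.mul_lt_top ENNReal.ofReal_lt_top
          (ENNReal.pow_lt_top ENNReal.ofReal_lt_top))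
    exact ENNReal.add_lt_top.2 ⟨ENNReal.add_lt_top.2 ⟨h1, h2⟩, hindlt⟩
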